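/- Assume the Common Givens: P_i is a preference order on C consistent with Q; the query is the pair (c_j,c_k) with P_i(c_j,c_k); and neither (c_j,c_k) nor (c_k,c_j) belongs to Q. Let P' ∈ μ(P_i), and let a, b ∈ C be two candidates such that P_i and P' order the pair {a,b} the same way, a is immediately above b in P_i (i.e. P_i(a,b) and the open segment (a, P_i, b) is empty), but the open segment (a, P', b) is nonempty. Then a ∈ [∞, P', c_k] (a is c_k or above c_k in P') and b ∈ [c_j, P', −∞] (b is c_j or below c_j in P'). -/
import Mathlib


/-- A preference order: a strict total order on candidates. -/
def IsPref {C : Type*} (P : C → C → Prop) : Prop :=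
  (∀ a b : C, a ≠ b → P a b ∨ P b a) ∧ (∀ a : C, ¬ P a a) ∧
    ∀ a b c : C, P a b → P b c → P a c

/-- The (closed) segment `[c, P, c']` of candidates between `c` and `c'`. -/
def seg {C : Type*} (P : C → C → Prop) (c c' : C) : Set C :=
  {d : C | (d = c ∨ P c d) ∧ (d = c' ∨ P d c')}

/-- `Q` is a strict partial order (consistent, transitively closed reported preferences). -/
def IsSPO {C : Type*} (Q : C → C → Prop) : Prop :=
  (∀ a : C, ¬ Q a a) ∧ ∀ a b c : C, Q a b → Q b c → Q a c

/-- `P` is consistent with (extends) the reported preferences `Q`, written `P ⊨ Q`. -/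
def Extends {C : Type*} (P Q : C → C → Prop) : Prop := ∀ a b : C, Q a b → P a b

/-- The swap distance between two preference orders: the number of (unordered) pairs of
candidates ordered differently, counted here as ordered pairs `(a, b)` with
`P a b` and `P' b a`. -/
noncomputable def dswap {C : Type*} [Fintype C] (P P' : C → C → Prop) : ℕ :=
  Set.ncard {p : C × C | P p.1 p.2 ∧ P' p.2 p.1}

/-- `P` is a preference order consistent with the transitive closure of `Q ∪ {(ck, cj)}`
(for a transitive total order this is the same as extending `Q` and putting `ck` above `cj`). -/
def Feasible {C : Type*} (Q : C → C → Prop) (cj ck : C) (P : C → C → Prop) : Prop :=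
  IsPref P ∧ Extends P Q ∧ P ck cj

/-- `P ∈ μ(Pi)`: among all preference orders consistent with the transitive closure of
`Q ∪ {(ck, cj)}`, `P` minimizes the swap distance to `Pi`. -/
def InMu {C : Type*} [Fintype C] (Q : C → C → Prop) (cj ck : C)
    (Pi P : C → C → Prop) : Prop :=
  Feasible Q cj ck P ∧ ∀ R : C → C → Prop, Feasible Q cj ck R → dswap Pi P ≤ dswap Pi R

theorem statement10 {C : Type*} [Fintype C]
    (Q : C → C → Prop) (hQ : IsSPO Q)
    (Pi : C → C → Prop) (hPi : IsPref Pi) (hPiQ : Extends Pi Q)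
    (cj ck : C) (hjk : Pi cj ck) (hQjk : ¬ Q cj ck) (hQkj : ¬ Q ck cj)
    (P' : C → C → Prop) (hmu : InMu Q cj ck Pi P')
    (a b : C) (hsame : Pi a b ↔ P' a b) (hab : Pi a b)
    (hadj : ∀ d : C, ¬ (Pi a d ∧ Pi d b))
    (hopen : ∃ d : C, P' a d ∧ P' d b) :
    (a = ck ∨ P' a ck) ∧ (b = cj ∨ P' cj b) := by
  classical
  obtain ⟨⟨hP', hQ', hkj⟩, hopt⟩ := hmu
  obtain ⟨htot, hirr, htr⟩ := hP'
  have hP'asym : ∀ x y : C, P' x y → ¬ P' y x := fun x y h1 h2 => hirr x (htr _ _ _ h1 h2)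
  have hPiasym : ∀ x y : C, Pi x y → ¬ Pi y x :=
    fun x y h1 h2 => hPi.2.1 x (hPi.2.2 _ _ _ h1 h2)
  have hPitot := hPi.1
  have hPitr := hPi.2.2
  -- well-foundedness of P'
  letI : IsTrans C P' := ⟨htr⟩
  letI : IsIrrefl C P' := ⟨hirr⟩
  have hwf : WellFounded P' := Finite.wellFounded_of_trans_of_irrefl P'
  -- immediate successor existence
  have hsucc : ∀ u : C, P' u b → ∃ s, P' u s ∧ (∀ x, ¬(P' u x ∧ P' x s)) ∧ (s = b ∨ P' s b) := by
    intro u hub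
    obtain ⟨s, hs, hmin⟩ := hwf.has_min {x | P' u x} ⟨b, hub⟩
    refine ⟨s, hs, fun x hx => hmin x hx.1 hx.2, ?_⟩
    by_cases hsb : s = b
    · exact Or.inl hsb
    · rcases htot s b hsb with h | h
      · exact Or.inr h
      · exact absurd h (hmin b hub)
  have hab' : P' a b := hsame.mp hab
  -- existence of a P'-adjacent disagreeing pair in the segment
  have hexist : ∃ u v, (u = a ∨ P' a u) ∧ (v = b ∨ P' v b) ∧ P' u v ∧
      (∀ x, ¬(P' u x ∧ P' x v)) ∧ Pi v u := by
    suffices h : ∀ n : ℕ, ∀ u : C, Set.ncard {x | P' u x ∧ P' x b} ≤ n →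
        (u = a ∨ (P' a u ∧ Pi a u)) → P' u b →
        ∃ u' v, (u' = a ∨ P' a u') ∧ (v = b ∨ P' v b) ∧ P' u' v ∧
          (∀ x, ¬(P' u' x ∧ P' x v)) ∧ Pi v u' by
      exact h _ a le_rfl (Or.inl rfl) hab'
    intro n
    induction n with
    | zero =>
      intro u hcard hua hub
      obtain ⟨s, hus, hadj', hsb⟩ := hsucc u hub
      have hsu : s ≠ u := fun h => hirr u (h ▸ hus)
      have hua' : u = a ∨ P' a u := hua.imp id And.left
      rcases hsb with rfl | hsb'
      · -- s = b
        by_cases hbu : Pi s u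
        · exact ⟨u, s, hua', Or.inl rfl, hus, hadj', hbu⟩
        · exfalso
          have hus' : Pi u s := (hPitot u s (Ne.symm hsu)).resolve_right hbu
          rcases hua with rfl | ⟨hau, hPiau⟩
          · obtain ⟨d, hd1, hd2⟩ := hopen
            exact hadj' d ⟨hd1, hd2⟩
          · exact hadj u ⟨hPiau, hus'⟩
      · exfalso
        have : s ∈ {x | P' u x ∧ P' x b} := ⟨hus, hsb'⟩
        have h1 : 0 < Set.ncard {x | P' u x ∧ P' x b} :=
          (Set.ncard_pos (Set.toFinite _)).mpr ⟨s, this⟩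
        omega
    | succ n ih =>
      intro u hcard hua hub
      obtain ⟨s, hus, hadj', hsb⟩ := hsucc u hub
      have hsu : s ≠ u := fun h => hirr u (h ▸ hus)
      have hua' : u = a ∨ P' a u := hua.imp id And.left
      by_cases hbu : Pi s u
      · exact ⟨u, s, hua', hsb, hus, hadj', hbu⟩
      · have hus' : Pi u s := (hPitot u s (Ne.symm hsu)).resolve_right hbu
        rcases hsb with rfl | hsb'
        · exfalso
          rcases hua with rfl | ⟨hau, hPiau⟩
          · obtain ⟨d, hd1, hd2⟩ := hopen
            exact hadj' d ⟨hd1, hd2⟩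
          · exact hadj u ⟨hPiau, hus'⟩
        · -- recurse on s
          have hPas : P' a s := by
            rcases hua' with rfl | h
            · exact hus
            · exact htr _ _ _ h hus
          have hPias : Pi a s := by
            rcases hua with rfl | ⟨_, hPiau⟩
            · exact hus'
            · exact hPitr _ _ _ hPiau hus'
          have hsubset : {x | P' s x ∧ P' x b} ⊆ {x | P' u x ∧ P' x b} \ {s} := by
            rintro x ⟨h1, h2⟩
            exact ⟨⟨htr _ _ _ hus h1, h2⟩, fun hx => hirr s (hx ▸ h1)⟩
          have hlt : Set.ncard {x | P' s x ∧ P' x b} ≤ n := by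
            have h2 : Set.ncard {x | P' s x ∧ P' x b} ≤
                Set.ncard ({x | P' u x ∧ P' x b} \ {s}) :=
              Set.ncard_le_ncard hsubset (Set.toFinite _)
            have h3 : Set.ncard ({x | P' u x ∧ P' x b} \ {s}) <
                Set.ncard {x | P' u x ∧ P' x b} :=
              Set.ncard_diff_singleton_lt_of_mem ⟨hus, hsb'⟩ (Set.toFinite _)
            omega
          exact ih s hlt (Or.inr ⟨hPas, hPias⟩) hsb'
  obtain ⟨u, v, hu, hv, huv, hadjuv, hPivu⟩ := hexist
  by_cases hblock : u = ck ∧ v = cj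
  · constructor
    · rcases hu with rfl | h
      · exact Or.inl hblock.1
      · exact Or.inr (hblock.1 ▸ h)
    · rcases hv with rfl | h
      · exact Or.inl hblock.2
      · exact Or.inr (hblock.2 ▸ h)
  · exfalso
    have huvne : u ≠ v := fun h => hirr u (h ▸ huv)
    set σ := Equiv.swap u v with hσ
    have hσu : σ u = v := Equiv.swap_apply_left u v
    have hσv : σ v = u := Equiv.swap_apply_right u v
    have hσo : ∀ x, x ≠ u → x ≠ v → σ x = x := fun x h1 h2 =>
      Equiv.swap_apply_of_ne_of_ne h1 h2
    have hout : ∀ x, x ≠ u → x ≠ v → ((P' x u ↔ P' x v) ∧ (P' u x ↔ P' v x)) := by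
      intro x hxu hxv
      constructor
      · constructor
        · intro h; exact htr _ _ _ h huv
        · intro h
          by_contra hxu'
          rcases htot u x (fun he => hxu he.symm) with h2 | h2
          · exact hadjuv x ⟨h2, h⟩
          · exact hxu' h2
      · constructor
        · intro h
          by_contra hvx
          rcases htot x v hxv with h2 | h2
          · exact hadjuv x ⟨h, h2⟩
          · exact hvx h2
        · intro h; exact htr _ _ _ huv h
    have hkey : ∀ x y : C, ¬(x = u ∧ y = v) → ¬(x = v ∧ y = u) →
        (P' (σ x) (σ y) ↔ P' x y) := by
      intro x y h1 h2
      by_cases hxu : x = u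
      · by_cases hyu : y = u
        · rw [hxu, hyu, hσu]
          exact iff_of_false (hirr v) (hirr u)
        · by_cases hyv : y = v
          · exact absurd ⟨hxu, hyv⟩ h1
          · rw [hxu, hσu, hσo y hyu hyv]; exact (hout y hyu hyv).2.symm
      · by_cases hxv : x = v
        · by_cases hyu : y = u
          · exact absurd ⟨hxv, hyu⟩ h2
          · by_cases hyv : y = v
            · rw [hxv, hyv, hσv]
              exact iff_of_false (hirr u) (hirr v)
            · rw [hxv, hσv, hσo y hyu hyv]; exact (hout y hyu hyv).2
        · rw [hσo x hxu hxv]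
          by_cases hyu : y = u
          · rw [hyu, hσu]; exact (hout x hxu hxv).1.symm
          · by_cases hyv : y = v
            · rw [hyv, hσv]; exact (hout x hxu hxv).1
            · rw [hσo y hyu hyv]
    set R : C → C → Prop := fun x y => P' (σ x) (σ y) with hR
    have hfeasR : Feasible Q cj ck R := by
      refine ⟨⟨?_, ?_, ?_⟩, ?_, ?_⟩
      · intro x y hxy
        exact htot (σ x) (σ y) (fun h => hxy (σ.injective h))
      · intro x; exact hirr (σ x)
      · intro x y z h1 h2; exact htr _ _ _ h1 h2
      · intro x y hQxy
        have hPixy : Pi x y := hPiQ x y hQxy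
        by_cases h1 : x = u ∧ y = v
        · exact absurd (h1.1 ▸ h1.2 ▸ hPixy) (hPiasym v u hPivu)
        · by_cases h2 : x = v ∧ y = u
          · show P' (σ x) (σ y)
            rw [h2.1, h2.2, hσv, hσu]; exact huv
          · exact (hkey x y h1 h2).mpr (hQ' x y hQxy)
      · show P' (σ ck) (σ cj)
        by_cases h2 : ck = v ∧ cj = u
        · rw [h2.1, h2.2, hσv, hσu]; exact huv
        · refine (hkey ck cj ?_ h2).mpr hkj
          intro ⟨e1, e2⟩
          exact hblock ⟨e1.symm, e2.symm⟩
    have hsets : {p : C × C | Pi p.1 p.2 ∧ R p.2 p.1} =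
        {p : C × C | Pi p.1 p.2 ∧ P' p.2 p.1} \ {(v, u)} := by
      ext ⟨x, y⟩
      simp only [Set.mem_setOf_eq, Set.mem_diff, Set.mem_singleton_iff, Prod.mk.injEq]
      constructor
      · rintro ⟨hPixy, hRyx⟩
        by_cases h1 : y = u ∧ x = v
        · exfalso
          have : P' (σ y) (σ x) := hRyx
          rw [h1.1, h1.2, hσu, hσv] at this
          exact hP'asym u v huv this
        · by_cases h2 : y = v ∧ x = u
          · exfalso
            exact hPiasym v u hPivu (h2.1 ▸ h2.2 ▸ hPixy)
          · refine ⟨⟨hPixy, (hkey y x h1 h2).mp hRyx⟩, ?_⟩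
            intro ⟨e1, e2⟩
            exact h1 ⟨e2, e1⟩
      · rintro ⟨⟨hPixy, hPyx⟩, hne⟩
        by_cases h1 : y = u ∧ x = v
        · exact absurd ⟨h1.2, h1.1⟩ hne
        · by_cases h2 : y = v ∧ x = u
          · exact absurd (h2.1 ▸ h2.2 ▸ hPyx) (hP'asym u v huv)
          · exact ⟨hPixy, (hkey y x h1 h2).mpr hPyx⟩
    have hmem : ((v, u) : C × C) ∈ {p : C × C | Pi p.1 p.2 ∧ P' p.2 p.1} := ⟨hPivu, huv⟩
    have hlt : dswap Pi R < dswap Pi P' := by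
      unfold dswap
      rw [hsets]
      exact Set.ncard_diff_singleton_lt_of_mem hmem (Set.toFinite _)
    exact absurd (hopt R hfeasR) (not_le.mpr hlt)
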